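/- Define J : ℕ × ℝ → ℝ recursively by J(0, y) = 1 and J(i+1, y) = ∫₀^y t·(1 − exp(−t))·J(i, t) dt. Then for every natural number i and every real y ≥ 0, J(i, y) = (1/(2^i · i!)) · ( y² − 2 + 2·(y + 1)·exp(−y) )^i. -/

import Mathlib

open MeasureTheory Real

/-- The iterated ordered integral `J 0 y = 1`,
`J (i+1) y = ∫₀^y t·(1 − e^{−t})·J i t dt` from Appendix F of the paper. -/
noncomputable def J : ℕ → ℝ → ℝ
  | 0 => fun _ => 1
  | i + 1 => fun y => ∫ t in (0 : ℝ)..y, t * (1 - Real.exp (-t)) * J i t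

noncomputable def g (t : ℝ) : ℝ := t ^ 2 - 2 + 2 * (t + 1) * Real.exp (-t)

lemma g_deriv (t : ℝ) : HasDerivAt g (2 * t * (1 - Real.exp (-t))) t := by
  have h1 : HasDerivAt (fun t : ℝ => Real.exp (-t)) (-Real.exp (-t)) t := by
    simpa [Function.comp_def] using (Real.hasDerivAt_exp (-t)).comp t (hasDerivAt_neg t)
  have h2 : HasDerivAt (fun t : ℝ => 2 * (t + 1) * Real.exp (-t))
      (2 * Real.exp (-t) + 2 * (t + 1) * (-Real.exp (-t))) t := by
    have := (((hasDerivAt_id t).add_const 1).const_mul 2).mul h1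
    simpa [mul_comm, Pi.mul_def] using this
  have h3 : HasDerivAt (fun t : ℝ => t ^ 2 - 2) (2 * t) t := by
    simpa using ((hasDerivAt_pow 2 t).sub_const 2)
  have := h3.add h2
  refine this.congr_deriv ?_
  ring

lemma g_pow_deriv (i : ℕ) (t : ℝ) :
    HasDerivAt (fun t => g t ^ (i + 1) / (2 * (i + 1)))
      (t * (1 - Real.exp (-t)) * g t ^ i) t := by
  have h := ((g_deriv t).pow (i + 1)).div_const (2 * (i + 1))
  refine h.congr_deriv ?_
  have : ((i : ℝ) + 1) ≠ 0 := by positivity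
  simp only [Nat.add_sub_cancel, Nat.cast_add, Nat.cast_one]
  field_simp

lemma g_cont : Continuous g := by
  unfold g; continuity

theorem J_closed_form (i : ℕ) (y : ℝ) (hy : 0 ≤ y) :
    J i y = (1 / (2 ^ i * (Nat.factorial i : ℝ))) *
      (y ^ 2 - 2 + 2 * (y + 1) * Real.exp (-y)) ^ i := by
  induction i generalizing y with
  | zero => simp [J]
  | succ i ih =>
    have key : J (i + 1) y
        = ∫ t in (0:ℝ)..y, (1 / (2 ^ i * (Nat.factorial i : ℝ))) *
            (t * (1 - Real.exp (-t)) * g t ^ i) := by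
      show (∫ t in (0:ℝ)..y, t * (1 - Real.exp (-t)) * J i t) = _
      apply intervalIntegral.integral_congr
      intro t ht
      rw [Set.uIcc_of_le hy] at ht
      simp only
      rw [ih t ht.1]
      unfold g; ring
    rw [key, intervalIntegral.integral_const_mul]
    have hint : ∫ t in (0:ℝ)..y, t * (1 - Real.exp (-t)) * g t ^ i
        = g y ^ (i + 1) / (2 * (i + 1)) - g 0 ^ (i + 1) / (2 * (i + 1)) := by
      apply intervalIntegral.integral_eq_sub_of_hasDerivAt
      · intro t _; exact g_pow_deriv i t
      · exact (Continuous.mul (by continuity) (g_cont.pow i)).intervalIntegrable _ _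
    rw [hint]
    have hg0 : g 0 = 0 := by simp [g]
    have hgy : g y = y ^ 2 - 2 + 2 * (y + 1) * Real.exp (-y) := rfl
    rw [hg0, hgy]
    have hfac : (Nat.factorial (i + 1) : ℝ) = (i + 1) * Nat.factorial i := by
      push_cast [Nat.factorial_succ]; ring
    have h1 : ((i : ℝ) + 1) ≠ 0 := by positivity
    have h2 : (Nat.factorial i : ℝ) ≠ 0 := Nat.cast_ne_zero.mpr (Nat.factorial_ne_zero i)
    rw [hfac]
    field_simp
    ring_nf
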